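/- arXiv:1206.6739 — 2 statements merged into one kernel-verified Lean document; each statement's English description precedes it below -/
import Mathlib

section
/- Let G be a locally compact Hausdorff group with a left Haar measure, acting continuously, freely, and properly on a locally compact Hausdorff space Ω. Then for every u ∈ Ω there exists a nonnegative continuous compactly supported function g : Ω → ℝ such that ∫_G g(s⁻¹·u) ds = 1. -/
open MeasureTheory

/-- If a second countable locally compact Hausdorff group `G` with a left Haar measure acts
continuously, freely and properly on a second countable locally compact Hausdorff space `Ω`,
then for every `u ∈ Ω` there is a nonnegative continuous compactly supported function
`g : Ω → ℝ` with `∫_G g(s⁻¹ • u) ds = 1`. -/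
theorem exists_bruhat_cutoff
    {G Ω : Type*} [Group G] [TopologicalSpace G] [IsTopologicalGroup G]
    [LocallyCompactSpace G] [T2Space G] [SecondCountableTopology G]
    [MeasurableSpace G] [BorelSpace G]
    (μ : Measure G) [μ.IsHaarMeasure]
    [TopologicalSpace Ω] [LocallyCompactSpace Ω] [T2Space Ω] [SecondCountableTopology Ω]
    [MulAction G Ω] [ContinuousSMul G Ω]
    (hfree : ∀ (s : G) (u : Ω), s • u = u → s = 1)
    (hproper : IsProperMap (fun p : G × Ω => (p.1 • p.2, p.2)))
    (u : Ω) :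
    ∃ g : Ω → ℝ, Continuous g ∧ HasCompactSupport g ∧ (∀ v, 0 ≤ g v) ∧
      ∫ s, g (s⁻¹ • u) ∂μ = 1 := by
  obtain ⟨f, f_comp, f_nonneg, f_pos⟩ := exists_continuous_nonneg_pos u
  -- the function `h : s ↦ f (s⁻¹ • u)` is continuous with compact support
  set h : G → ℝ := fun s => f (s⁻¹ • u) with hh
  have h_cont : Continuous h :=
    f.continuous.comp ((continuous_inv).smul continuous_const)
  have h_comp : HasCompactSupport h := by
    -- preimage of `tsupport f × {u}` under the proper map is compact
    have hK : IsCompact ((fun p : G × Ω => (p.1 • p.2, p.2)) ⁻¹'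
        (tsupport f ×ˢ {u})) :=
      hproper.isCompact_preimage (f_comp.prod isCompact_singleton)
    have hC : IsCompact (Prod.fst '' ((fun p : G × Ω => (p.1 • p.2, p.2)) ⁻¹'
        (tsupport f ×ˢ {u}))) := hK.image continuous_fst
    have hC' : IsCompact (Prod.fst '' ((fun p : G × Ω => (p.1 • p.2, p.2)) ⁻¹'
        (tsupport f ×ˢ {u})))⁻¹ := hC.inv
    apply HasCompactSupport.of_support_subset_isCompact hC'
    intro s hs
    refine Set.mem_inv.2 ⟨(s⁻¹, u), ?_, rfl⟩
    simp only [Set.mem_preimage, Set.prodMk_mem_set_prod_eq, Set.mem_singleton_iff, and_true]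
    exact subset_tsupport _ hs
  have h_int : Integrable h μ := h_cont.integrable_of_hasCompactSupport h_comp
  have h_nonneg : ∀ s, 0 ≤ h s := fun s => f_nonneg _
  have hI : 0 < ∫ s, h s ∂μ := by
    rw [integral_pos_iff_support_of_nonneg h_nonneg h_int]
    have hopen : IsOpen (Function.support h) := by
      have : Function.support h = h ⁻¹' {0}ᶜ := by
        ext s; simp [Function.mem_support]
      rw [this]
      exact (isClosed_singleton.preimage h_cont).isOpen_compl
    have hne : (Function.support h).Nonempty := ⟨1, by simpa [h] using f_pos⟩
    exact hopen.measure_pos μ hne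
  set I : ℝ := ∫ s, h s ∂μ with hIdef
  refine ⟨fun v => I⁻¹ * f v, continuous_const.mul f.continuous,
    (f_comp.mul_left), fun v => mul_nonneg (inv_nonneg.2 hI.le) (f_nonneg v), ?_⟩
  rw [integral_const_mul]
  exact inv_mul_cancel₀ hI.ne'
end

section
/- Let G act properly on Ω with left Haar measure on G, and suppose q : Ω → G\Ω is the (open) quotient map. Then the averaging map Ψ : C_c(Ω) → C_c(G\Ω), given by Ψ(a)(q(u)) = ∫_G a(s⁻¹·u) ds, is surjective. In particular, for every f ∈ C_c(G\Ω) there exists a ∈ C_c(Ω) with Ψ(a) = f. -/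
open MeasureTheory Set

/-- For a free and proper action of a locally compact group `G` on `Ω`, the averaging map
`Ψ : C_c(Ω) → C_c(G\Ω)`, `Ψ(a)(q(u)) = ∫_G a (s⁻¹ • u) ds`, is surjective: every continuous
compactly supported function on the orbit space is of the form `Ψ(a)`. -/
theorem orbit_average_surjective
    {G Ω : Type*} [Group G] [TopologicalSpace G] [IsTopologicalGroup G]
    [LocallyCompactSpace G] [T2Space G] [SecondCountableTopology G]
    [MeasurableSpace G] [BorelSpace G]
    (μ : Measure G) [μ.IsHaarMeasure]
    [TopologicalSpace Ω] [LocallyCompactSpace Ω] [T2Space Ω] [SecondCountableTopology Ω]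
    [MulAction G Ω] [ContinuousSMul G Ω]
    (hfree : ∀ (s : G) (u : Ω), s • u = u → s = 1)
    (hproper : IsProperMap (fun p : G × Ω => (p.1 • p.2, p.2)))
    (f : Quotient (MulAction.orbitRel G Ω) → ℂ)
    (hf : Continuous f) (hf' : HasCompactSupport f) :
    ∃ a : Ω → ℂ, Continuous a ∧ HasCompactSupport a ∧
      ∀ u : Ω, ∫ s, a (s⁻¹ • u) ∂μ = f (Quotient.mk (MulAction.orbitRel G Ω) u) := by
  classical
  set q : Ω → Quotient (MulAction.orbitRel G Ω) := Quotient.mk (MulAction.orbitRel G Ω) with hqdef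
  have hq_cont : Continuous q := continuous_quot_mk
  have hq_open : IsOpenMap q := MulAction.isOpenQuotientMap_quotientMk.isOpenMap
  have f_inv : ∀ (t : G) (u : Ω), f (q (t • u)) = f (q u) := by
    intro t u
    congr 1
    exact Quotient.sound ((MulAction.orbitRel_apply (G := G)).mpr (MulAction.mem_orbit u t))
  -- a compact "lift" of the support of `f`
  obtain ⟨K', hK'c, hK'⟩ : ∃ K' : Set Ω, IsCompact K' ∧ tsupport f ⊆ q '' K' := by
    have key : ∀ x ∈ tsupport f, ∃ V : Set Ω, IsCompact V ∧ q '' interior V ∈ nhds x := by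
      intro x hx
      obtain ⟨u, rfl⟩ : ∃ u, q u = x := Quotient.exists_rep x
      obtain ⟨V, hVc, hVn⟩ := exists_compact_mem_nhds u
      exact ⟨V, hVc, (hq_open _ isOpen_interior).mem_nhds
        ⟨u, mem_interior_iff_mem_nhds.2 hVn, rfl⟩⟩
    choose V hVc hVn using key
    obtain ⟨t, ht⟩ := hf'.elim_nhds_subcover' (fun x hx => q '' interior (V x hx)) hVn
    refine ⟨⋃ x ∈ t, V x.1 x.2, t.isCompact_biUnion (fun x _ => hVc x.1 x.2), ?_⟩
    refine ht.trans ?_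
    refine iUnion₂_subset fun x hx => ?_
    rintro y ⟨u, hu, rfl⟩
    exact ⟨u, Set.mem_biUnion hx (interior_subset hu), rfl⟩
  -- a bump function positive on `K'`
  obtain ⟨h, h_one, -, h_supp, h_mem⟩ :=
    exists_continuous_one_zero_of_isCompact hK'c isClosed_empty (disjoint_empty K')
  have h_nonneg : ∀ x, 0 ≤ h x := fun x => (h_mem x).1
  have h_le_one : ∀ x, h x ≤ 1 := fun x => (h_mem x).2
  -- compact support in the group variable, via properness
  have cptC : ∀ N : Set Ω, IsCompact N →
      IsCompact (Prod.fst '' ((fun p : G × Ω => (p.1 • p.2, p.2)) ⁻¹' (N ×ˢ tsupport h))) :=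
    fun N hN => ((hproper.isCompact_preimage (hN.prod h_supp)).image continuous_fst)
  have suppC : ∀ (N : Set Ω) (u : Ω), u ∈ N → ∀ s : G, h (s⁻¹ • u) ≠ 0 →
      s ∈ Prod.fst '' ((fun p : G × Ω => (p.1 • p.2, p.2)) ⁻¹' (N ×ˢ tsupport h)) := by
    intro N u hu s hs
    refine ⟨(s, s⁻¹ • u), ?_, rfl⟩
    simp only [Set.mem_preimage, smul_inv_smul, Set.mem_prod]
    exact ⟨hu, subset_tsupport _ hs⟩
  have cont_orb : ∀ u : Ω, Continuous fun s : G => h (s⁻¹ • u) :=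
    fun u => h.continuous.comp (continuous_inv.smul continuous_const)
  have integ : ∀ u : Ω, Integrable (fun s : G => h (s⁻¹ • u)) μ := by
    intro u
    refine (cont_orb u).integrable_of_hasCompactSupport ?_
    refine HasCompactSupport.intro (cptC {u} isCompact_singleton) ?_
    intro s hs
    by_contra hne
    exact hs (suppC {u} u rfl s hne)
  set H : Ω → ℝ := fun u => ∫ s, h (s⁻¹ • u) ∂μ with hHdef
  have H_cont : Continuous H := by
    rw [continuous_iff_continuousAt]
    intro u₀
    obtain ⟨N, hNc, hNn⟩ := exists_compact_mem_nhds u₀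
    set C := Prod.fst '' ((fun p : G × Ω => (p.1 • p.2, p.2)) ⁻¹' (N ×ˢ tsupport h)) with hCdef
    refine continuousAt_of_dominated (bound := C.indicator fun _ => (1 : ℝ)) ?_ ?_ ?_ ?_
    · exact Filter.Eventually.of_forall fun u => (cont_orb u).aestronglyMeasurable
    · filter_upwards [hNn] with u hu
      refine Filter.Eventually.of_forall fun s => ?_
      by_cases hs : h (s⁻¹ • u) = 0
      · simp only [hs, norm_zero]
        exact Set.indicator_apply_nonneg fun _ => zero_le_one
      · rw [Set.indicator_of_mem (suppC N u hu s hs)]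
        rw [Real.norm_eq_abs, abs_of_nonneg (h_nonneg _)]
        exact h_le_one _
    · rw [integrable_indicator_iff ((cptC N hNc).isClosed.measurableSet)]
      exact (integrableOn_const_iff).mpr (Or.inr (cptC N hNc).measure_lt_top)
    · exact Filter.Eventually.of_forall fun s =>
        (h.continuous.comp (continuous_const.smul continuous_id)).continuousAt
  have H_inv : ∀ (t : G) (u : Ω), H (t • u) = H u := by
    intro t u
    have : (fun s : G => h (s⁻¹ • (t • u))) = fun s : G => (fun s' : G => h (s'⁻¹ • u)) (t⁻¹ * s) := by
      funext s
      simp only [mul_inv_rev, inv_inv, mul_smul]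
    rw [hHdef]
    simp only [this]
    exact integral_mul_left_eq_self (fun s' : G => h (s'⁻¹ • u)) t⁻¹
  have H_posK : ∀ u : Ω, q u ∈ q '' K' → 0 < H u := by
    intro u hu
    obtain ⟨k, hk, hqk⟩ := hu
    obtain ⟨t, ht⟩ : ∃ t : G, t • k = u := by
      have h1 : k ∈ MulAction.orbit G u :=
        (MulAction.orbitRel_apply (G := G)).mp (Quotient.exact hqk)
      obtain ⟨t, ht⟩ := h1
      exact ⟨t⁻¹, by rw [← ht]; simp⟩
    rw [← ht, H_inv]
    refine (integral_pos_iff_support_of_nonneg (fun s => h_nonneg _) (integ k)).mpr ?_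
    have hopen : IsOpen (Function.support fun s : G => h (s⁻¹ • k)) :=
      (cont_orb k).isOpen_support
    refine hopen.measure_pos μ ⟨1, ?_⟩
    simp only [Function.mem_support, inv_one, one_smul]
    rw [h_one hk]
    exact one_ne_zero
  have H_pos' : ∀ u : Ω, u ∈ q ⁻¹' tsupport f → 0 < H u := by
    intro u hu
    exact H_posK u (hK' hu)
  -- the candidate function
  set a : Ω → ℂ := fun u => f (q u) * ((h u / H u : ℝ) : ℂ) with hadef
  have ha_cont : Continuous a := by
    rw [continuous_iff_continuousAt]
    intro u
    by_cases hu : 0 < H u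
    · have : ContinuousAt (fun v => ((h v / H v : ℝ) : ℂ)) u :=
        Complex.continuous_ofReal.continuousAt.comp
          (h.continuous.continuousAt.div H_cont.continuousAt hu.ne')
      exact ((hf.comp hq_cont).continuousAt).mul this
    · have hu' : u ∉ q ⁻¹' tsupport f := fun hmem => hu (H_pos' u hmem)
      have hopen : IsOpen (q ⁻¹' tsupport f)ᶜ :=
        (isClosed_tsupport f).preimage hq_cont |>.isOpen_compl
      have : ∀ v ∈ (q ⁻¹' tsupport f)ᶜ, a v = 0 := by
        intro v hv
        have : f (q v) = 0 := image_eq_zero_of_notMem_tsupport (by simpa using hv)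
        simp [hadef, this]
      refine ContinuousAt.congr (f := fun _ : Ω => (0 : ℂ)) continuousAt_const ?_
      filter_upwards [hopen.mem_nhds hu'] with v hv
      exact (this v hv).symm
  have ha_supp : HasCompactSupport a := by
    refine h_supp.mono ?_
    intro x hx
    simp only [Function.mem_support, hadef] at hx ⊢
    intro hzero
    exact hx (by simp [hzero])
  refine ⟨a, ha_cont, ha_supp, ?_⟩
  intro u
  by_cases hfu : f (q u) = 0
  · have : ∀ s : G, a (s⁻¹ • u) = 0 := by
      intro s
      simp [hadef, f_inv, hfu]
    simp only [this, integral_zero]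
    exact hfu.symm
  · have hH : 0 < H u := H_pos' u (subset_tsupport f (by simpa using hfu))
    have key : ∀ s : G, a (s⁻¹ • u) = f (q u) * ((h (s⁻¹ • u) / H u : ℝ) : ℂ) := by
      intro s
      simp only [hadef, f_inv, H_inv]
    simp only [key]
    rw [integral_const_mul]
    have : ∫ s, ((h (s⁻¹ • u) / H u : ℝ) : ℂ) ∂μ = ((∫ s, h (s⁻¹ • u) / H u ∂μ : ℝ) : ℂ) :=
      integral_ofReal
    rw [this, integral_div, div_self hH.ne']
    simp
end
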